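/- For every m ≥ 0 and every nonnegative data vector y ∈ ℝ₊^{2m+1}, the function x ↦ I(y‖x*x) attains its minimum over ℝ₊^{m+1}: there exists x⋆ ∈ ℝ₊^{m+1} such that I(y‖x⋆*x⋆) ≤ I(y‖x*x) for all x ∈ ℝ₊^{m+1} (values taken in [0,∞]). -/

import Mathlib

open Finset Filter

/-- Extension of `x : Fin (m+1) → ℝ` to `ℕ`, zero outside `[0, m]`. -/
def ext (m : ℕ) (x : Fin (m + 1) → ℝ) (k : ℕ) : ℝ :=
  if h : k < m + 1 then x ⟨k, h⟩ else 0

/-- Autoconvolution `(x*x)_i = ∑_{j=0}^{i} x_{i-j} x_j`. -/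
def aconv (m : ℕ) (x : Fin (m + 1) → ℝ) : Fin (2 * m + 1) → ℝ :=
  fun i => ∑ j ∈ Finset.range (i.1 + 1), ext m x (i.1 - j) * ext m x j

/-- The index `ℓ + j ∈ {0,…,2m}` for `ℓ, j ∈ {0,…,m}`. -/
def idx (m : ℕ) (ℓ j : Fin (m + 1)) : Fin (2 * m + 1) :=
  ⟨ℓ.1 + j.1, by have h1 := ℓ.isLt; have h2 := j.isLt; omega⟩

/-- One term of the I-divergence, with values in `[0,∞]`, with the conventions
`0·log(0/b) = 0` and value `∞` if `a > 0 = b`. -/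
noncomputable def termDiv (a b : ℝ) : ENNReal :=
  if a = 0 then ENNReal.ofReal b
  else if b = 0 then ⊤
  else ENNReal.ofReal (a * Real.log (a / b) - a + b)

/-- `[0,∞]`-valued I-divergence between vectors. -/
noncomputable def Idiv {n : ℕ} (u v : Fin n → ℝ) : ENNReal :=
  ∑ i, termDiv (u i) (v i)

/-- Real-valued I-divergence between vectors (used when the second argument is
positive wherever the first one is). -/
noncomputable def IdivR {n : ℕ} (u v : Fin n → ℝ) : ℝ :=
  ∑ i, (u i * Real.log (u i / v i) - u i + v i)

/-- `[0,∞]`-valued I-divergence between `(2m+1) × (m+1)` matrices. -/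
noncomputable def IdivM (m : ℕ) (M N : Fin (2 * m + 1) → Fin (m + 1) → ℝ) : ENNReal :=
  ∑ i, ∑ j, termDiv (M i j) (N i j)

/-- Real-valued I-divergence between `(2m+1) × (m+1)` matrices. -/
noncomputable def IdivMR (m : ℕ) (M N : Fin (2 * m + 1) → Fin (m + 1) → ℝ) : ℝ :=
  ∑ i, ∑ j, (M i j * Real.log (M i j / N i j) - M i j + N i j)

/-- The set 𝒴: nonnegative matrices supported on `{(i,j) : j ≤ i ≤ j+m}` with row sums `y`. -/
def calY (m : ℕ) (y : Fin (2 * m + 1) → ℝ) (Y : Fin (2 * m + 1) → Fin (m + 1) → ℝ) : Prop :=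
  (∀ i j, 0 ≤ Y i j) ∧
  (∀ (i : Fin (2 * m + 1)) (j : Fin (m + 1)), ¬(j.1 ≤ i.1 ∧ i.1 ≤ j.1 + m) → Y i j = 0) ∧
  (∀ i, ∑ j, Y i j = y i)

/-- The matrix `W(x)` with `W(x)_{ij} = x_{i-j} x_j` on the support and `0` elsewhere. -/
def Wmat (m : ℕ) (x : Fin (m + 1) → ℝ) (i : Fin (2 * m + 1)) (j : Fin (m + 1)) : ℝ :=
  if h : j.1 ≤ i.1 ∧ i.1 ≤ j.1 + m then x ⟨i.1 - j.1, by omega⟩ * x j else 0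

/-- The matrix `Y*(x)` with `Y*(x)_{ij} = (x_{i-j} x_j/(x*x)_i)·y_i` on the support. -/
noncomputable def Ystar (m : ℕ) (y : Fin (2 * m + 1) → ℝ) (x : Fin (m + 1) → ℝ)
    (i : Fin (2 * m + 1)) (j : Fin (m + 1)) : ℝ :=
  if h : j.1 ≤ i.1 ∧ i.1 ≤ j.1 + m then
    x ⟨i.1 - j.1, by omega⟩ * x j / aconv m x i * y i
  else 0

/-- `Ŷ_j = ∑_{i=0}^{m} Y_{i+j,i} + ∑_{i=j}^{j+m} Y_{ij}`. -/
def Yhat (m : ℕ) (Y : Fin (2 * m + 1) → Fin (m + 1) → ℝ) (j : Fin (m + 1)) : ℝ :=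
  (∑ ℓ : Fin (m + 1), Y (idx m ℓ j) ℓ) + ∑ ℓ : Fin (m + 1), Y (idx m ℓ j) j

/-- The algorithm map `T(x)_j = x_j (1/c) ∑_ℓ x_ℓ y_{ℓ+j}/(x*x)_{ℓ+j}`,
with `c = √(∑ y_i)`. -/
noncomputable def Tmap (m : ℕ) (y : Fin (2 * m + 1) → ℝ) (x : Fin (m + 1) → ℝ)
    (j : Fin (m + 1)) : ℝ :=
  x j * (1 / Real.sqrt (∑ i, y i)) * ∑ ℓ, x ℓ * y (idx m ℓ j) / aconv m x (idx m ℓ j)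

/-- The gradient `∇_j I(x) = 2 ∑_ℓ ( x_ℓ − x_ℓ y_{ℓ+j}/(x*x)_{ℓ+j} )`. -/
noncomputable def gradI (m : ℕ) (y : Fin (2 * m + 1) → ℝ) (x : Fin (m + 1) → ℝ)
    (j : Fin (m + 1)) : ℝ :=
  2 * ∑ ℓ, (x ℓ - x ℓ * y (idx m ℓ j) / aconv m x (idx m ℓ j))

lemma cont_ext (m : ℕ) (k : ℕ) : Continuous fun x : Fin (m+1) → ℝ => _root_.ext m x k := by
  unfold _root_.ext
  by_cases h : k < m + 1
  · simp only [h, dif_pos]; exact continuous_apply _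
  · simp only [h, dif_neg, not_false_iff]; exact continuous_const

lemma cont_aconv (m : ℕ) (i : Fin (2*m+1)) :
    Continuous fun x : Fin (m+1) → ℝ => aconv m x i := by
  unfold aconv
  exact continuous_finset_sum _ fun j _ => (cont_ext m _).mul (cont_ext m _)

lemma termDiv_eq (a b : ℝ) (ha : a ≠ 0) (hb : b ≠ 0) :
    termDiv a b = ENNReal.ofReal (a * Real.log a - a * Real.log b - a + b) := by
  rw [termDiv, if_neg ha, if_neg hb, Real.log_div ha hb]
  ring_nf

lemma termDiv_lsc {a : ℝ} (ha : 0 ≤ a) : LowerSemicontinuous (termDiv a) := by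
  rcases eq_or_lt_of_le ha with h0 | hpos
  · have he : termDiv a = fun b => ENNReal.ofReal b := by
      funext b; simp [termDiv, ← h0]
    rw [he]
    exact ENNReal.continuous_ofReal.lowerSemicontinuous
  intro b₀
  rcases eq_or_ne b₀ 0 with rfl | hb0
  · intro c hc
    have htop : termDiv a 0 = ⊤ := by simp [termDiv, hpos.ne']
    rw [htop] at hc
    have key : Tendsto (fun b : ℝ => a * Real.log a - a * Real.log b - a + b)
        (nhdsWithin 0 {0}ᶜ) atTop := by
      have h1 : Tendsto (fun b : ℝ => a * Real.log a - a * Real.log b)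
          (nhdsWithin 0 {0}ᶜ) atTop := by
        have hb := Real.tendsto_log_nhdsNE_zero.const_mul_atBot hpos
        have := tendsto_neg_atBot_atTop.comp hb
        have := tendsto_atTop_add_const_left _ (a * Real.log a) this
        exact this.congr (fun b => by simp [Function.comp]; ring)
      have h2 : Tendsto (fun b : ℝ => -a + b) (nhdsWithin 0 {0}ᶜ) (nhds (-a + 0)) :=
        (tendsto_const_nhds.add (tendsto_id.mono_left nhdsWithin_le_nhds))
      have := h1.atTop_add h2
      exact this.congr (fun b => by ring)
    have key2 : Tendsto (fun b => termDiv a b) (nhdsWithin 0 {0}ᶜ) (nhds ⊤) := by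
      have h3 := ENNReal.tendsto_ofReal_atTop.comp key
      refine h3.congr' ?_
      filter_upwards [self_mem_nhdsWithin] with b hb
      rw [Function.comp_apply, termDiv_eq a b hpos.ne' hb]
    have hev : ∀ᶠ b in nhdsWithin 0 {0}ᶜ, c < termDiv a b :=
      key2 (Ioi_mem_nhds hc)
    rw [← nhdsNE_sup_pure]
    rw [eventually_sup]
    refine ⟨hev, ?_⟩
    rw [eventually_pure]; show c < termDiv a 0; rw [htop]; exact hc
  · have hcont : ContinuousAt (termDiv a) b₀ := by
      have hev : (fun b => ENNReal.ofReal (a * Real.log a - a * Real.log b - a + b))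
          =ᶠ[nhds b₀] termDiv a := by
        filter_upwards [eventually_ne_nhds hb0] with b hb
        exact (termDiv_eq a b hpos.ne' hb).symm
      refine ContinuousAt.congr ?_ hev
      refine ENNReal.continuous_ofReal.continuousAt.comp ?_
      have hlog : ContinuousAt Real.log b₀ := Real.continuousAt_log hb0
      exact ((continuousAt_const.sub (continuousAt_const.mul hlog)).sub
        continuousAt_const).add continuousAt_id
    exact hcont.lowerSemicontinuousAt

lemma le_termDiv {a b : ℝ} (ha : 0 ≤ a) (hb : 0 ≤ b) :
    ENNReal.ofReal (b - a - 2 * Real.sqrt (a * b)) ≤ termDiv a b := by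
  rcases eq_or_lt_of_le ha with h0 | hapos
  · simp [termDiv, ← h0]
  rcases eq_or_lt_of_le hb with h0b | hbpos
  · simp [termDiv, ← h0b, hapos.ne']
  rw [termDiv, if_neg hapos.ne', if_neg hbpos.ne']
  apply ENNReal.ofReal_le_ofReal
  have hlog : Real.log (b / a) ≤ 2 * Real.sqrt (b / a) := by
    have h1 : Real.log (Real.sqrt (b / a)) ≤ Real.sqrt (b / a) - 1 :=
      Real.log_le_sub_one_of_pos (Real.sqrt_pos.mpr (div_pos hbpos hapos))
    have h2 : Real.log (Real.sqrt (b / a)) = Real.log (b / a) / 2 :=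
      Real.log_sqrt (le_of_lt (div_pos hbpos hapos))
    nlinarith [Real.sqrt_nonneg (b / a)]
  have hmul : a * Real.log (b / a) ≤ 2 * Real.sqrt (a * b) := by
    have h3 : a * Real.log (b / a) ≤ a * (2 * Real.sqrt (b / a)) :=
      mul_le_mul_of_nonneg_left hlog ha
    have h4 : a * Real.sqrt (b / a) = Real.sqrt (a * b) := by
      rw [← Real.sqrt_sq ha, ← Real.sqrt_mul (sq_nonneg a)]
      congr 1
      field_simp
      ring_nf; rw [Real.sq_sqrt (sq_nonneg a)]
    nlinarith [h4]
  have hlogflip : Real.log (a / b) = - Real.log (b / a) := by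
    rw [← Real.log_inv]
    congr 1
    field_simp
  nlinarith [hmul, hlogflip]

/-- A lower semicontinuous `ℝ≥0∞`-valued function on a nonempty compact subset of a
metric space attains its minimum. -/
lemma lsc_exists_min {E : Type*} [MetricSpace E] {K : Set E} (hK : IsCompact K)
    (hne : K.Nonempty) {f : E → ENNReal} (hf : LowerSemicontinuous f) :
    ∃ x ∈ K, ∀ z ∈ K, f x ≤ f z := by
  set S : ENNReal := ⨅ z ∈ K, f z with hS
  rcases eq_or_ne S ⊤ with hStop | hSne
  · obtain ⟨x, hx⟩ := hne
    refine ⟨x, hx, fun z hz => ?_⟩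
    have : S ≤ f z := biInf_le f hz
    rw [hStop] at this
    simp [top_le_iff.mp this]
  -- choose approximating sequence
  have hseq : ∀ n : ℕ, ∃ z ∈ K, f z < S + ((n+1 : ℕ) : ENNReal)⁻¹ := by
    intro n
    by_contra hcon
    push_neg at hcon
    have : S + ((n+1 : ℕ) : ENNReal)⁻¹ ≤ S := le_iInf₂ hcon
    have hlt : S < S + ((n+1 : ℕ) : ENNReal)⁻¹ :=
      ENNReal.lt_add_right hSne (by simp)
    exact absurd (lt_of_lt_of_le hlt this) (lt_irrefl _)
  choose u huK hfu using hseq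
  obtain ⟨x, hxK, φ, hφ, hconv⟩ := hK.tendsto_subseq huK
  refine ⟨x, hxK, fun z hz => ?_⟩
  have hxS : f x ≤ S := by
    by_contra hcon
    push_neg at hcon
    obtain ⟨c, hc1, hc2⟩ := exists_between hcon
    have hev : ∀ᶠ b in nhds x, c < f b := hf x c hc2
    have hev2 : ∀ᶠ k in atTop, c < f (u (φ k)) := hconv.eventually hev
    -- find N with S + (N+1)⁻¹ ≤ c
    have hc0 : c - S ≠ 0 := by
      simp only [ne_eq, tsub_eq_zero_iff_le, not_le]
      exact hc1
    obtain ⟨N, hN⟩ := ENNReal.exists_inv_nat_lt hc0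
    have hev3 : ∀ᶠ k in atTop, f (u (φ k)) < c := by
      filter_upwards [eventually_ge_atTop N] with k hk
      have h1 : f (u (φ k)) < S + ((φ k + 1 : ℕ) : ENNReal)⁻¹ := hfu (φ k)
      have h2 : ((φ k + 1 : ℕ) : ENNReal)⁻¹ ≤ ((N:ℕ) : ENNReal)⁻¹ := by
        apply ENNReal.inv_le_inv.mpr
        have : N ≤ φ k := le_trans hk (hφ.le_apply)
        exact_mod_cast Nat.le_succ_of_le this
      calc f (u (φ k)) < S + ((φ k + 1 : ℕ) : ENNReal)⁻¹ := h1
        _ ≤ S + ((N:ℕ) : ENNReal)⁻¹ := add_le_add_right h2 S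
        _ ≤ S + (c - S) := add_le_add_right hN.le S
        _ = c := add_tsub_cancel_of_le hc1.le
    obtain ⟨k, hk1, hk2⟩ := (hev2.and hev3).exists
    exact absurd hk1 (not_lt.mpr hk2.le)
  exact le_trans hxS (biInf_le f hz)

lemma ext_nonneg (m : ℕ) {x : Fin (m+1) → ℝ} (hx : ∀ j, 0 ≤ x j) (k : ℕ) :
    0 ≤ _root_.ext m x k := by
  unfold _root_.ext
  split <;> simp [hx]

lemma aconv_nonneg (m : ℕ) {x : Fin (m+1) → ℝ} (hx : ∀ j, 0 ≤ x j) (i : Fin (2*m+1)) :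
    0 ≤ aconv m x i :=
  Finset.sum_nonneg fun j _ => mul_nonneg (ext_nonneg m hx _) (ext_nonneg m hx _)

lemma sq_le_aconv (m : ℕ) {x : Fin (m+1) → ℝ} (hx : ∀ j, 0 ≤ x j) (j : Fin (m+1)) :
    x j ^ 2 ≤ aconv m x (idx m j j) := by
  have hmem : j.1 ∈ Finset.range ((idx m j j).1 + 1) := by
    simp [idx]
  have hterm : _root_.ext m x ((idx m j j).1 - j.1) * _root_.ext m x j.1 = x j ^ 2 := by
    have h1 : (idx m j j).1 - j.1 = j.1 := by simp [idx]
    rw [h1]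
    have h2 : _root_.ext m x j.1 = x j := by
      simp [_root_.ext, j.isLt]
    rw [h2]; ring
  calc x j ^ 2 = _root_.ext m x ((idx m j j).1 - j.1) * _root_.ext m x j.1 := hterm.symm
    _ ≤ aconv m x (idx m j j) :=
      Finset.single_le_sum (f := fun k => _root_.ext m x ((idx m j j).1 - k) * _root_.ext m x k)
        (fun k _ => mul_nonneg (ext_nonneg m hx _) (ext_nonneg m hx _)) hmem

lemma aconv_ones_pos (m : ℕ) (i : Fin (2*m+1)) :
    0 < aconv m (fun _ => 1) i := by
  set k0 : ℕ := if i.1 ≤ m then 0 else i.1 - m with hk0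
  have hik : i.1 < 2 * m + 1 := i.isLt
  have hk0le : k0 ≤ i.1 ∧ k0 < m + 1 ∧ i.1 - k0 < m + 1 := by
    by_cases h : i.1 ≤ m <;> simp [hk0, h] <;> omega
  have hmem : k0 ∈ Finset.range (i.1 + 1) := by
    simp; omega
  have hterm : _root_.ext m (fun _ => (1:ℝ)) (i.1 - k0) * _root_.ext m (fun _ => 1) k0 = 1 := by
    simp [_root_.ext, hk0le.2.1, hk0le.2.2]
  have hle : (1:ℝ) ≤ aconv m (fun _ => 1) i := by
    calc (1:ℝ) = _ := hterm.symm
      _ ≤ aconv m (fun _ => 1) i :=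
        Finset.single_le_sum (f := fun k => _root_.ext m (fun _ => (1:ℝ)) (i.1 - k) *
          _root_.ext m (fun _ => 1) k)
          (fun k _ => mul_nonneg (ext_nonneg m (fun _ => zero_le_one) _)
            (ext_nonneg m (fun _ => zero_le_one) _)) hmem
  linarith

lemma termDiv_ne_top {a b : ℝ} (hb : 0 < b) : termDiv a b ≠ ⊤ := by
  rw [termDiv]
  split
  · exact ENNReal.ofReal_ne_top
  · rw [if_neg hb.ne']
    exact ENNReal.ofReal_ne_top


/-- existence of a minimizer of `x ↦ I(y‖x*x)` over `ℝ₊^{m+1}`. -/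
theorem stmt0 (m : ℕ) (y : Fin (2 * m + 1) → ℝ) (hy : ∀ i, 0 ≤ y i) :
    ∃ xs : Fin (m + 1) → ℝ, (∀ j, 0 ≤ xs j) ∧
      ∀ x : Fin (m + 1) → ℝ, (∀ j, 0 ≤ x j) →
        Idiv y (aconv m xs) ≤ Idiv y (aconv m x) := by
  classical
  set F : (Fin (m+1) → ℝ) → ENNReal := fun x => Idiv y (aconv m x) with hF
  -- F is lower semicontinuous
  have hlsc : LowerSemicontinuous F := by
    have : F = fun x => ∑ i, termDiv (y i) (aconv m x i) := rfl
    rw [this]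
    exact lowerSemicontinuous_sum fun i _ =>
      (termDiv_lsc (hy i)).comp (cont_aconv m i)
  -- the reference point: all ones
  set x₁ : Fin (m+1) → ℝ := fun _ => 1 with hx₁
  have hFx₁ : F x₁ ≠ ⊤ := by
    rw [hF]
    unfold Idiv
    rw [ne_eq, ENNReal.sum_eq_top]
    push_neg
    intro i _
    exact termDiv_ne_top (aconv_ones_pos m i)
  set A : ℝ := ∑ i, y i with hA
  have hA0 : 0 ≤ A := Finset.sum_nonneg fun i _ => hy i
  have hyA : ∀ i, y i ≤ A := fun i =>
    Finset.single_le_sum (fun i _ => hy i) (Finset.mem_univ i)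
  set C : ℝ := (F x₁).toReal with hC
  set C' : ℝ := max C 0 with hC'
  set R : ℝ := 1 + Real.sqrt A + Real.sqrt (C' + 2*A + 1) with hR
  have hR1 : (1:ℝ) ≤ R := by
    have := Real.sqrt_nonneg A
    have := Real.sqrt_nonneg (C' + 2*A + 1)
    linarith
  -- key coercivity: if some x j > R then F x₁ ≤ F x
  have hcoer : ∀ x : Fin (m+1) → ℝ, (∀ j, 0 ≤ x j) → (∃ j, R < x j) → F x₁ ≤ F x := by
    intro x hx ⟨j, hj⟩
    set i : Fin (2*m+1) := idx m j j with hi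
    set b : ℝ := aconv m x i with hb
    have hbnn : 0 ≤ b := aconv_nonneg m hx i
    have hbsq : x j ^ 2 ≤ b := sq_le_aconv m hx j
    set a : ℝ := y i with ha
    have haA : a ≤ A := hyA i
    have han : 0 ≤ a := hy i
    -- lower bound on  b - a - 2√(ab)
    have hsb : R < Real.sqrt b := by
      have h1 : x j ≤ Real.sqrt b := by
        rw [show x j = Real.sqrt (x j ^2) from (Real.sqrt_sq (hx j)).symm]
        exact Real.sqrt_le_sqrt hbsq
      linarith
    have hsa : Real.sqrt a ≤ Real.sqrt A := Real.sqrt_le_sqrt haA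
    have hsab : Real.sqrt (a * b) = Real.sqrt a * Real.sqrt b := Real.sqrt_mul han b
    have hkey : C' + 1 ≤ b - a - 2 * Real.sqrt (a * b) := by
      have hsqb : Real.sqrt b ^ 2 = b := Real.sq_sqrt hbnn
      have hsqa : Real.sqrt a ^ 2 = a := Real.sq_sqrt han
      have hdiff : 1 + Real.sqrt (C' + 2*A + 1) ≤ Real.sqrt b - Real.sqrt a := by
        have := Real.sqrt_nonneg A
        nlinarith [hsb, hsa]
      have hCA : C' + 2*A + 1 ≤ (Real.sqrt b - Real.sqrt a)^2 := by
        have h5 : Real.sqrt (C' + 2*A + 1) ^ 2 = C' + 2*A + 1 := by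
          apply Real.sq_sqrt
          have : 0 ≤ C' := le_max_right _ _
          linarith
        nlinarith [Real.sqrt_nonneg (C' + 2*A + 1), hdiff]
      have hexp : (Real.sqrt b - Real.sqrt a)^2 = b + a - 2 * Real.sqrt (a*b) := by
        rw [hsab]; nlinarith [hsqa, hsqb]
      have hAa : a ≤ A := haA
      nlinarith [hCA, hexp]
    -- conclude
    have h6 : F x₁ ≤ ENNReal.ofReal C' := by
      rw [hC']
      calc F x₁ = ENNReal.ofReal C := (ENNReal.ofReal_toReal hFx₁).symm
        _ ≤ ENNReal.ofReal (max C 0) := ENNReal.ofReal_le_ofReal (le_max_left _ _)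
    have h7 : ENNReal.ofReal C' ≤ ENNReal.ofReal (b - a - 2 * Real.sqrt (a*b)) :=
      ENNReal.ofReal_le_ofReal (by linarith)
    have h8 : ENNReal.ofReal (b - a - 2 * Real.sqrt (a*b)) ≤ termDiv a b :=
      le_termDiv han hbnn
    have h9 : termDiv a b ≤ F x := by
      rw [hF]
      unfold Idiv
      exact Finset.single_le_sum (f := fun i => termDiv (y i) (aconv m x i))
        (fun i _ => zero_le) (Finset.mem_univ i)
    exact le_trans h6 (le_trans h7 (le_trans h8 h9))
  -- minimize over the compact box
  set K : Set (Fin (m+1) → ℝ) := Set.Icc 0 (fun _ => R) with hK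
  have hKc : IsCompact K := isCompact_Icc
  have hKne : K.Nonempty := ⟨0, le_refl _, fun j => by simpa using le_trans zero_le_one hR1⟩
  obtain ⟨xs, hxsK, hxsmin⟩ := lsc_exists_min hKc hKne hlsc
  have hxs0 : ∀ j, 0 ≤ xs j := fun j => hxsK.1 j
  refine ⟨xs, hxs0, fun x hx => ?_⟩
  by_cases hxK : x ∈ K
  · exact hxsmin x hxK
  · have hx₁K : x₁ ∈ K := by
      constructor
      · intro j; exact zero_le_one
      · intro j; exact hR1
    have hxj : ∃ j, R < x j := by
      by_contra hcon
      push_neg at hcon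
      exact hxK ⟨fun j => hx j, fun j => hcon j⟩
    exact le_trans (hxsmin x₁ hx₁K) (hcoer x hx hxj)
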